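/- Let $\{s_k\}_{k \ge 1}$ be a monotonically decreasing sequence of nonnegative reals and $\{a_k\}_{k \ge 0}$ a nonnegative sequence with $a_k \le C(k+1)^{-\beta}$ for some $C > 0$, $\beta > 0$, such that $\sum_{j=l}^{k} s_j \le a_l$ for all integers $1 \le l < k$. Then there is a constant $\tilde C > 0$ such that $s_k \le \tilde C (k+1)^{-\beta - 1}$ for all $k \ge 1$. -/

import Mathlib

theorem stmt_18 (s a : ℕ → ℝ) (C β : ℝ)
    (hs : ∀ k, 0 ≤ s k) (hsmono : ∀ j k : ℕ, 1 ≤ j → j ≤ k → s k ≤ s j)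
    (ha : ∀ k, 0 ≤ a k) (hC : 0 < C) (hβ : 0 < β)
    (habd : ∀ k : ℕ, a k ≤ C * ((k : ℝ) + 1) ^ (-β))
    (hsum : ∀ l k : ℕ, 1 ≤ l → l < k → ∑ j ∈ Finset.Icc l k, s j ≤ a l) :
    ∃ C' : ℝ, 0 < C' ∧ ∀ k : ℕ, 1 ≤ k → s k ≤ C' * ((k : ℝ) + 1) ^ (-β - 1) := by
  refine ⟨C * 2 ^ (β + 1), by positivity, ?_⟩
  intro k hk
  have h2pos : (0:ℝ) < (2:ℝ) ^ (β + 1) := Real.rpow_pos_of_pos (by norm_num) _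
  rcases eq_or_lt_of_le hk with hk1 | hk2
  · -- k = 1
    subst hk1
    have hsum12 : s 1 + s 2 ≤ a 1 := by
      have h := hsum 1 2 (le_refl 1) (by norm_num)
      have : Finset.Icc 1 2 = ({1, 2} : Finset ℕ) := rfl
      rw [this] at h
      simpa using h
    have h1 : s 1 ≤ C := by
      have hle : a 1 ≤ C * ((1:ℝ) + 1) ^ (-β) := by simpa using habd 1
      have h2le1 : ((1:ℝ) + 1) ^ (-β) ≤ 1 :=
        Real.rpow_le_one_of_one_le_of_nonpos (by norm_num) (by linarith)
      nlinarith [hs 2, Real.rpow_nonneg (show (0:ℝ) ≤ 2 by norm_num) (-β)]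
    have key : (2:ℝ) ^ (β + 1) * (2:ℝ) ^ (-β - 1) = 1 := by
      rw [← Real.rpow_add (by norm_num : (0:ℝ) < 2)]
      norm_num
    have : ((1:ℕ):ℝ) + 1 = 2 := by norm_num
    rw [this]
    calc s 1 ≤ C := h1
      _ = C * ((2:ℝ) ^ (β + 1) * (2:ℝ) ^ (-β - 1)) := by rw [key, mul_one]
      _ = C * 2 ^ (β + 1) * 2 ^ (-β - 1) := by ring
  · -- k ≥ 2
    set l := k / 2 with hl
    have hl1 : 1 ≤ l := Nat.one_le_div_iff (by norm_num) |>.mpr (by omega)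
    have hlk : l < k := Nat.div_lt_self (by omega) (by norm_num)
    -- sum lower bound
    have hcard : (Finset.Icc l k).card = k + 1 - l := Nat.card_Icc l k
    have hlow : ((k + 1 - l : ℕ) : ℝ) * s k ≤ ∑ j ∈ Finset.Icc l k, s j := by
      have := Finset.card_nsmul_le_sum (Finset.Icc l k) s (s k) (fun j hj => by
        rw [Finset.mem_Icc] at hj
        exact hsmono j k (le_trans hl1 hj.1) hj.2)
      rwa [hcard, nsmul_eq_mul] at this
    have h1 : ((k + 1 - l : ℕ) : ℝ) * s k ≤ C * ((l : ℝ) + 1) ^ (-β) :=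
      le_trans hlow (le_trans (hsum l k hl1 hlk) (habd l))
    set N : ℝ := (k : ℝ) with hN
    have hN1 : (0:ℝ) < N + 1 := by positivity
    have hhalf1 : (N + 1) / 2 ≤ (l : ℝ) + 1 := by
      have : (k : ℝ) ≤ 2 * l + 1 := by
        have : k ≤ 2 * l + 1 := by omega
        exact_mod_cast this
      linarith
    have hhalf2 : (N + 1) / 2 ≤ ((k + 1 - l : ℕ) : ℝ) := by
      have : k + 1 ≤ 2 * (k + 1 - l) := by omega
      have h' : (k : ℝ) + 1 ≤ 2 * ((k + 1 - l : ℕ) : ℝ) := by exact_mod_cast this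
      linarith
    have hhalfpos : (0:ℝ) < (N + 1) / 2 := by linarith
    -- antitone of rpow in base for neg exponent
    have hanti : ((l : ℝ) + 1) ^ (-β) ≤ ((N + 1) / 2) ^ (-β) := by
      rw [Real.rpow_neg (by positivity), Real.rpow_neg (by linarith)]
      apply inv_anti₀ (Real.rpow_pos_of_pos hhalfpos β)
      exact Real.rpow_le_rpow (by linarith) hhalf1 hβ.le
    have h2 : ((N + 1) / 2) * s k ≤ C * ((N + 1) / 2) ^ (-β) := by
      calc ((N + 1) / 2) * s k ≤ ((k + 1 - l : ℕ) : ℝ) * s k :=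
            mul_le_mul_of_nonneg_right hhalf2 (hs k)
        _ ≤ C * ((l : ℝ) + 1) ^ (-β) := h1
        _ ≤ C * ((N + 1) / 2) ^ (-β) := mul_le_mul_of_nonneg_left hanti hC.le
    have h3 : s k ≤ C * ((N + 1) / 2) ^ (-β - 1) := by
      have hdiv : s k ≤ C * ((N + 1) / 2) ^ (-β) / ((N + 1) / 2) := by
        rw [le_div_iff₀ hhalfpos]
        linarith [h2]
      have hrw : ((N + 1) / 2) ^ (-β - 1)
          = ((N + 1) / 2) ^ (-β) / ((N + 1) / 2) := by
        rw [Real.rpow_sub hhalfpos, Real.rpow_one]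
      rw [hrw]
      calc s k ≤ C * ((N + 1) / 2) ^ (-β) / ((N + 1) / 2) := hdiv
        _ = C * (((N + 1) / 2) ^ (-β) / ((N + 1) / 2)) := by ring
    calc s k ≤ C * ((N + 1) / 2) ^ (-β - 1) := h3
      _ = C * 2 ^ (β + 1) * (N + 1) ^ (-β - 1) := by
          rw [Real.div_rpow (by linarith) (by norm_num)]
          rw [show (-β - 1) = -(β + 1) by ring, Real.rpow_neg (by norm_num : (0:ℝ) ≤ 2)]
          field_simp
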